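/- (A classical solution of the coupled model satisfies the quasi-weak formulation Problem EC.) Let Ω₁ = (0,1)×(0,1), Ω₂ = (1,2)×(0,1), Γ = {1}×[0,1]. Let c₁, c₂ > 0 be constants, let β₁, β₂ : ℝ² → ℝ be C¹ and f₁, f₂, g₁, g₂ : ℝ² → ℝ be continuous on neighborhoods of the closures of Ω₁, Ω₂ respectively, and let u₁, u₂ : ℝ² → ℝ be C² on neighborhoods of the closures of Ω₁, Ω₂ satisfying: c₁ g₁ − div(β₁ ∇u₁) = f₁ on Ω₁; c₂ g₂ − div(β₂ ∇u₂) = f₂ on Ω₂; and the Neumann interface condition β₁(1,y) ∂₁u₁(1,y) = β₂(1,y) ∂₁u₂(1,y) for all y ∈ [0,1]. Then for all test functions v₁, v₂ : ℝ² → ℝ that are C¹ on neighborhoods of the closures of Ω₁, Ω₂ and vanish on ∂Ω₁ \ Γ and ∂Ω₂ \ Γ respectively (with NO matching condition on Γ), one has c₁∫_{Ω₁} g₁ v₁ + ∫_{Ω₁} β₁ ∇u₁·∇v₁ + c₂∫_{Ω₂} g₂ v₂ + ∫_{Ω₂} β₂ ∇u₂·∇v₂ = ∫_{Ω₁} f₁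 v₁ + ∫_{Ω₂} f₂ v₂ + ∫₀¹ β₂(1,y) ∂₁u₂(1,y) v₁(1,y) dy − ∫₀¹ β₁(1,y) ∂₁u₁(1,y) v₂(1,y) dy. -/

import Mathlib

open MeasureTheory Set

/-- First partial derivative `∂₁ f` of a function on the plane. -/
noncomputable def pd1 (f : ℝ × ℝ → ℝ) (z : ℝ × ℝ) : ℝ := fderiv ℝ f z (1, 0)

/-- Second partial derivative `∂₂ f` of a function on the plane. -/
noncomputable def pd2 (f : ℝ × ℝ → ℝ) (z : ℝ × ℝ) : ℝ := fderiv ℝ f z (0, 1)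

/-- Divergence `div(β∇u) = ∂₁(β ∂₁u) + ∂₂(β ∂₂u)`. -/
noncomputable def divGrad (β u : ℝ × ℝ → ℝ) (z : ℝ × ℝ) : ℝ :=
  pd1 (fun w => β w * pd1 u w) z + pd2 (fun w => β w * pd2 u w) z

lemma pd1_contDiffOn {u : ℝ × ℝ → ℝ} {U : Set (ℝ × ℝ)} (hU : IsOpen U)
    (hu : ContDiffOn ℝ 2 u U) : ContDiffOn ℝ 1 (pd1 u) U :=
  (hu.fderiv_of_isOpen hU (by norm_num)).clm_apply contDiffOn_const

lemma pd2_contDiffOn {u : ℝ × ℝ → ℝ} {U : Set (ℝ × ℝ)} (hU : IsOpen U)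
    (hu : ContDiffOn ℝ 2 u U) : ContDiffOn ℝ 1 (pd2 u) U :=
  (hu.fderiv_of_isOpen hU (by norm_num)).clm_apply contDiffOn_const

lemma pd1_mul {A B : ℝ × ℝ → ℝ} {z : ℝ × ℝ} (hA : DifferentiableAt ℝ A z)
    (hB : DifferentiableAt ℝ B z) :
    pd1 (fun w => A w * B w) z = pd1 A z * B z + A z * pd1 B z := by
  simp only [pd1]
  rw [fderiv_fun_mul hA hB]
  simp only [ContinuousLinearMap.add_apply, ContinuousLinearMap.smul_apply, smul_eq_mul]
  ring

lemma pd2_mul {A B : ℝ × ℝ → ℝ} {z : ℝ × ℝ} (hA : DifferentiableAt ℝ A z)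
    (hB : DifferentiableAt ℝ B z) :
    pd2 (fun w => A w * B w) z = pd2 A z * B z + A z * pd2 B z := by
  simp only [pd2]
  rw [fderiv_fun_mul hA hB]
  simp only [ContinuousLinearMap.add_apply, ContinuousLinearMap.smul_apply, smul_eq_mul]
  ring

lemma restrict_rect_eq (a b : ℝ) :
    (volume : Measure (ℝ × ℝ)).restrict (Ioc a b ×ˢ Ioc (0:ℝ) 1)
      = (volume : Measure (ℝ × ℝ)).restrict (Ioo a b ×ˢ Ioo (0:ℝ) 1) := by
  rw [Measure.volume_eq_prod, ← Measure.prod_restrict, ← Measure.prod_restrict,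
    Measure.restrict_congr_set Ioo_ae_eq_Ioc.symm,
    Measure.restrict_congr_set Ioo_ae_eq_Ioc.symm]

/-- Green's identity on a rectangle `(a,b) × (0,1)`. -/
lemma green_rect (a b : ℝ) (hab : a < b) (β u v : ℝ × ℝ → ℝ) (U : Set (ℝ × ℝ))
    (hU : IsOpen U) (hUc : Icc a b ×ˢ Icc (0:ℝ) 1 ⊆ U)
    (hβ : ContDiffOn ℝ 1 β U) (hu : ContDiffOn ℝ 2 u U) (hv : ContDiffOn ℝ 1 v U) :
    (∫ z in Ioo a b ×ˢ Ioo (0:ℝ) 1,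
        (divGrad β u z * v z + β z * (pd1 u z * pd1 v z + pd2 u z * pd2 v z)))
      = (((∫ x in a..b, β (x, 1) * pd2 u (x, 1) * v (x, 1))
          - ∫ x in a..b, β (x, 0) * pd2 u (x, 0) * v (x, 0))
          + ∫ y in (0:ℝ)..1, β (b, y) * pd1 u (b, y) * v (b, y))
        - ∫ y in (0:ℝ)..1, β (a, y) * pd1 u (a, y) * v (a, y) := by
  set f : ℝ × ℝ → ℝ := fun z => β z * pd1 u z * v z with hf_def
  set g : ℝ × ℝ → ℝ := fun z => β z * pd2 u z * v z with hg_def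
  have hA1 : ContDiffOn ℝ 1 (fun w => β w * pd1 u w) U := hβ.mul (pd1_contDiffOn hU hu)
  have hA2 : ContDiffOn ℝ 1 (fun w => β w * pd2 u w) U := hβ.mul (pd2_contDiffOn hU hu)
  have hf : ContDiffOn ℝ 1 f U := hA1.mul hv
  have hg : ContDiffOn ℝ 1 g U := hA2.mul hv
  have hdiffAt : ∀ {F : ℝ × ℝ → ℝ}, ContDiffOn ℝ 1 F U → ∀ {z : ℝ × ℝ}, z ∈ U →
      DifferentiableAt ℝ F z := fun {F} hF {z} hz =>
    ((hF.differentiableOn one_ne_zero).differentiableAt (hU.mem_nhds hz))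
  -- pointwise divergence identity on U
  have hDiv : ∀ z ∈ U, fderiv ℝ f z (1, 0) + fderiv ℝ g z (0, 1)
      = divGrad β u z * v z + β z * (pd1 u z * pd1 v z + pd2 u z * pd2 v z) := by
    intro z hz
    have h1 : fderiv ℝ f z (1, 0) = pd1 f z := rfl
    have h2 : fderiv ℝ g z (0, 1) = pd2 g z := rfl
    rw [h1, h2, hf_def, hg_def]
    rw [pd1_mul (hdiffAt hA1 hz) (hdiffAt hv hz),
        pd2_mul (hdiffAt hA2 hz) (hdiffAt hv hz)]
    simp only [divGrad]
    ring
  -- continuity of the divergence integrand on U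
  have hcontD : ContinuousOn (fun z => fderiv ℝ f z (1, 0) + fderiv ℝ g z (0, 1)) U := by
    have c1 : ContinuousOn (fun z => fderiv ℝ f z) U :=
      hf.continuousOn_fderiv_of_isOpen hU le_rfl
    have c2 : ContinuousOn (fun z => fderiv ℝ g z) U :=
      hg.continuousOn_fderiv_of_isOpen hU le_rfl
    exact (c1.clm_apply continuousOn_const).add (c2.clm_apply continuousOn_const)
  have hIccU : Icc a b ×ˢ Icc (0:ℝ) 1 ⊆ U := hUc
  have hcompact : IsCompact (Icc a b ×ˢ Icc (0:ℝ) 1) := (isCompact_Icc).prod isCompact_Icc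
  have hIi : IntegrableOn (fun z => fderiv ℝ f z (1, 0) + fderiv ℝ g z (0, 1))
      (Icc a b ×ˢ Icc (0:ℝ) 1) :=
    (hcontD.mono hIccU).integrableOn_compact hcompact
  have huIcc1 : Set.uIcc a b = Icc a b := uIcc_of_le hab.le
  have huIcc2 : Set.uIcc (0:ℝ) 1 = Icc (0:ℝ) 1 := uIcc_of_le (by norm_num)
  have key := integral2_divergence_prod_of_hasFDerivAt_off_countable f g
    (fun z => fderiv ℝ f z) (fun z => fderiv ℝ g z) a 0 b 1 ∅ countable_empty
    (by rw [huIcc1, huIcc2]; exact (hf.continuousOn).mono hIccU)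
    (by rw [huIcc1, huIcc2]; exact (hg.continuousOn).mono hIccU)
    (by
      intro z hz
      have hz' : z ∈ Ioo a b ×ˢ Ioo (0:ℝ) 1 := by
        simpa [min_eq_left hab.le, max_eq_right hab.le,
          min_eq_left (by norm_num : (0:ℝ) ≤ 1),
          max_eq_right (by norm_num : (0:ℝ) ≤ 1)] using hz
      have hzU : z ∈ U := hIccU ⟨Ioo_subset_Icc_self hz'.1, Ioo_subset_Icc_self hz'.2⟩
      exact (hdiffAt hf hzU).hasFDerivAt)
    (by
      intro z hz
      have hz' : z ∈ Ioo a b ×ˢ Ioo (0:ℝ) 1 := by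
        simpa [min_eq_left hab.le, max_eq_right hab.le,
          min_eq_left (by norm_num : (0:ℝ) ≤ 1),
          max_eq_right (by norm_num : (0:ℝ) ≤ 1)] using hz
      have hzU : z ∈ U := hIccU ⟨Ioo_subset_Icc_self hz'.1, Ioo_subset_Icc_self hz'.2⟩
      exact (hdiffAt hg hzU).hasFDerivAt)
    (by rw [huIcc1, huIcc2]; exact hIi)
  -- convert iterated integral to set integral over the open rectangle
  have hsub : Ioc a b ×ˢ Ioc (0:ℝ) 1 ⊆ Icc a b ×ˢ Icc (0:ℝ) 1 :=
    prod_mono Ioc_subset_Icc_self Ioc_subset_Icc_self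
  have hII : IntegrableOn (fun z => fderiv ℝ f z (1, 0) + fderiv ℝ g z (0, 1))
      (Ioc a b ×ˢ Ioc (0:ℝ) 1) := hIi.mono_set hsub
  have hII' : IntegrableOn (fun z => fderiv ℝ f z (1, 0) + fderiv ℝ g z (0, 1))
      (Ioc a b ×ˢ Ioc (0:ℝ) 1) ((volume : Measure ℝ).prod volume) := by
    rwa [← Measure.volume_eq_prod]
  have hiter : (∫ z in Ioc a b ×ˢ Ioc (0:ℝ) 1, (fderiv ℝ f z (1, 0) + fderiv ℝ g z (0, 1)))
      = ∫ x in a..b, ∫ y in (0:ℝ)..1,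
          fderiv ℝ f (x, y) (1, 0) + fderiv ℝ g (x, y) (0, 1) := by
    rw [Measure.volume_eq_prod, setIntegral_prod _ hII',
      intervalIntegral.integral_of_le hab.le]
    exact (setIntegral_congr_fun measurableSet_Ioc fun x _ =>
      (intervalIntegral.integral_of_le (by norm_num : (0:ℝ) ≤ 1))).symm
  have hfinal : (∫ z in Ioo a b ×ˢ Ioo (0:ℝ) 1,
        (divGrad β u z * v z + β z * (pd1 u z * pd1 v z + pd2 u z * pd2 v z)))
      = ∫ x in a..b, ∫ y in (0:ℝ)..1,
          fderiv ℝ f (x, y) (1, 0) + fderiv ℝ g (x, y) (0, 1) := by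
    calc (∫ z in Ioo a b ×ˢ Ioo (0:ℝ) 1,
        (divGrad β u z * v z + β z * (pd1 u z * pd1 v z + pd2 u z * pd2 v z)))
        = ∫ z in Ioo a b ×ˢ Ioo (0:ℝ) 1, (fderiv ℝ f z (1, 0) + fderiv ℝ g z (0, 1)) := by
          refine setIntegral_congr_fun (measurableSet_Ioo.prod measurableSet_Ioo) fun z hz => ?_
          have hzU : z ∈ U := hIccU ⟨Ioo_subset_Icc_self hz.1, Ioo_subset_Icc_self hz.2⟩
          exact (hDiv z hzU).symm
      _ = ∫ z in Ioc a b ×ˢ Ioc (0:ℝ) 1, (fderiv ℝ f z (1, 0) + fderiv ℝ g z (0, 1)) := by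
          rw [restrict_rect_eq a b]
      _ = _ := hiter
  rw [hfinal, key]

lemma pd1_continuousOn {v : ℝ × ℝ → ℝ} {U : Set (ℝ × ℝ)} (hU : IsOpen U)
    (hv : ContDiffOn ℝ 1 v U) : ContinuousOn (pd1 v) U :=
  (hv.continuousOn_fderiv_of_isOpen hU le_rfl).clm_apply continuousOn_const

lemma pd2_continuousOn {v : ℝ × ℝ → ℝ} {U : Set (ℝ × ℝ)} (hU : IsOpen U)
    (hv : ContDiffOn ℝ 1 v U) : ContinuousOn (pd2 v) U :=
  (hv.continuousOn_fderiv_of_isOpen hU le_rfl).clm_apply continuousOn_const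

lemma interval_zero {F : ℝ → ℝ} {a b : ℝ} (hab : a ≤ b) (h : ∀ x ∈ Icc a b, F x = 0) :
    ∫ x in a..b, F x = 0 := by
  rw [intervalIntegral.integral_congr (g := fun _ => (0:ℝ))
    (by rw [uIcc_of_le hab]; exact h)]
  simp

/-- A classical solution of the coupled two-domain heat model satisfies the quasi-weak
formulation Problem EC (equation (4.1)): with `Ω₁ = (0,1)×(0,1)`, `Ω₂ = (1,2)×(0,1)`,
`Γ = {1}×[0,1]`, densities `c₁, c₂ > 0`, classical solutions `u₁, u₂` of
`cᵢ gᵢ − div(βᵢ∇uᵢ) = fᵢ` on `Ωᵢ` satisfying the Neumann interface condition, and any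
C¹ test functions `v₁, v₂` vanishing on `∂Ωᵢ \ Γ` (with no matching condition on `Γ`),
the quasi-weak identity with the two interface flux terms holds. -/
theorem classical_solution_satisfies_ProblemEC
    (Ω₁ Ω₂ : Set (ℝ × ℝ))
    (hΩ₁ : Ω₁ = Ioo (0:ℝ) 1 ×ˢ Ioo (0:ℝ) 1)
    (hΩ₂ : Ω₂ = Ioo (1:ℝ) 2 ×ˢ Ioo (0:ℝ) 1)
    (c₁ c₂ : ℝ) (hc₁ : 0 < c₁) (hc₂ : 0 < c₂)
    (β₁ β₂ f₁ f₂ g₁ g₂ u₁ u₂ : ℝ × ℝ → ℝ)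
    (U₁ U₂ : Set (ℝ × ℝ))
    (hU₁ : IsOpen U₁) (hU₁Ω : closure Ω₁ ⊆ U₁)
    (hU₂ : IsOpen U₂) (hU₂Ω : closure Ω₂ ⊆ U₂)
    (hβ₁ : ContDiffOn ℝ 1 β₁ U₁) (hβ₂ : ContDiffOn ℝ 1 β₂ U₂)
    (hf₁ : ContinuousOn f₁ U₁) (hf₂ : ContinuousOn f₂ U₂)
    (hg₁ : ContinuousOn g₁ U₁) (hg₂ : ContinuousOn g₂ U₂)
    (hu₁ : ContDiffOn ℝ 2 u₁ U₁) (hu₂ : ContDiffOn ℝ 2 u₂ U₂)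
    -- the PDEs in the two subdomains
    (hPDE₁ : ∀ z ∈ Ω₁, c₁ * g₁ z - divGrad β₁ u₁ z = f₁ z)
    (hPDE₂ : ∀ z ∈ Ω₂, c₂ * g₂ z - divGrad β₂ u₂ z = f₂ z)
    -- the Neumann interface condition β₁∇u₁·n₁ + β₂∇u₂·n₂ = 0 on Γ
    (hNeu : ∀ y ∈ Icc (0:ℝ) 1, β₁ (1, y) * pd1 u₁ (1, y) = β₂ (1, y) * pd1 u₂ (1, y)) :
    ∀ v₁ v₂ : ℝ × ℝ → ℝ,
      ContDiffOn ℝ 1 v₁ U₁ → ContDiffOn ℝ 1 v₂ U₂ →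
      -- v₁ vanishes on ∂Ω₁ \ Γ
      (∀ y ∈ Icc (0:ℝ) 1, v₁ (0, y) = 0) →
      (∀ x ∈ Icc (0:ℝ) 1, v₁ (x, 0) = 0) →
      (∀ x ∈ Icc (0:ℝ) 1, v₁ (x, 1) = 0) →
      -- v₂ vanishes on ∂Ω₂ \ Γ
      (∀ y ∈ Icc (0:ℝ) 1, v₂ (2, y) = 0) →
      (∀ x ∈ Icc (1:ℝ) 2, v₂ (x, 0) = 0) →
      (∀ x ∈ Icc (1:ℝ) 2, v₂ (x, 1) = 0) →
      c₁ * (∫ z in Ω₁, g₁ z * v₁ z)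
        + (∫ z in Ω₁, β₁ z * (pd1 u₁ z * pd1 v₁ z + pd2 u₁ z * pd2 v₁ z))
        + c₂ * (∫ z in Ω₂, g₂ z * v₂ z)
        + (∫ z in Ω₂, β₂ z * (pd1 u₂ z * pd1 v₂ z + pd2 u₂ z * pd2 v₂ z))
      = (∫ z in Ω₁, f₁ z * v₁ z) + (∫ z in Ω₂, f₂ z * v₂ z)
        + (∫ y in (0:ℝ)..1, β₂ (1, y) * pd1 u₂ (1, y) * v₁ (1, y))
        - (∫ y in (0:ℝ)..1, β₁ (1, y) * pd1 u₁ (1, y) * v₂ (1, y)) := by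
  intro v₁ v₂ hv₁ hv₂ hL1 hB1 hT1 hR2 hB2 hT2
  subst hΩ₁ hΩ₂
  have hcl₁ : closure (Ioo (0:ℝ) 1 ×ˢ Ioo (0:ℝ) 1) = Icc (0:ℝ) 1 ×ˢ Icc (0:ℝ) 1 := by
    rw [closure_prod_eq, closure_Ioo (by norm_num : (0:ℝ) ≠ 1)]
  have hcl₂ : closure (Ioo (1:ℝ) 2 ×ˢ Ioo (0:ℝ) 1) = Icc (1:ℝ) 2 ×ˢ Icc (0:ℝ) 1 := by
    rw [closure_prod_eq, closure_Ioo (by norm_num : (1:ℝ) ≠ 2),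
      closure_Ioo (by norm_num : (0:ℝ) ≠ 1)]
  have hsub₁ : Icc (0:ℝ) 1 ×ˢ Icc (0:ℝ) 1 ⊆ U₁ := hcl₁ ▸ hU₁Ω
  have hsub₂ : Icc (1:ℝ) 2 ×ˢ Icc (0:ℝ) 1 ⊆ U₂ := hcl₂ ▸ hU₂Ω
  have G₁ := green_rect 0 1 one_pos β₁ u₁ v₁ U₁ hU₁ hsub₁ hβ₁ hu₁ hv₁
  have G₂ := green_rect 1 2 one_lt_two β₂ u₂ v₂ U₂ hU₂ hsub₂ hβ₂ hu₂ hv₂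
  rw [interval_zero (F := fun x => β₁ (x, 1) * pd2 u₁ (x, 1) * v₁ (x, 1)) (by norm_num)
        (fun x hx => by show β₁ (x, 1) * pd2 u₁ (x, 1) * v₁ (x, 1) = 0; rw [hT1 x hx, mul_zero]),
      interval_zero (F := fun x => β₁ (x, 0) * pd2 u₁ (x, 0) * v₁ (x, 0)) (by norm_num)
        (fun x hx => by show β₁ (x, 0) * pd2 u₁ (x, 0) * v₁ (x, 0) = 0; rw [hB1 x hx, mul_zero]),
      interval_zero (F := fun y => β₁ (0, y) * pd1 u₁ (0, y) * v₁ (0, y)) (by norm_num)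
        (fun y hy => by show β₁ (0, y) * pd1 u₁ (0, y) * v₁ (0, y) = 0; rw [hL1 y hy, mul_zero])] at G₁
  rw [interval_zero (F := fun x => β₂ (x, 1) * pd2 u₂ (x, 1) * v₂ (x, 1)) (by norm_num)
        (fun x hx => by show β₂ (x, 1) * pd2 u₂ (x, 1) * v₂ (x, 1) = 0; rw [hT2 x hx, mul_zero]),
      interval_zero (F := fun x => β₂ (x, 0) * pd2 u₂ (x, 0) * v₂ (x, 0)) (by norm_num)
        (fun x hx => by show β₂ (x, 0) * pd2 u₂ (x, 0) * v₂ (x, 0) = 0; rw [hB2 x hx, mul_zero]),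
      interval_zero (F := fun y => β₂ (2, y) * pd1 u₂ (2, y) * v₂ (2, y)) (by norm_num)
        (fun y hy => by show β₂ (2, y) * pd1 u₂ (2, y) * v₂ (2, y) = 0; rw [hR2 y hy, mul_zero])] at G₂
  simp only [zero_sub, sub_zero, zero_add, add_zero] at G₁ G₂
  -- swap the fluxes using the Neumann condition
  have hswap₁ : (∫ y in (0:ℝ)..1, β₁ (1, y) * pd1 u₁ (1, y) * v₁ (1, y))
      = ∫ y in (0:ℝ)..1, β₂ (1, y) * pd1 u₂ (1, y) * v₁ (1, y) := by
    refine intervalIntegral.integral_congr fun y hy => ?_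
    rw [uIcc_of_le (by norm_num : (0:ℝ) ≤ 1)] at hy
    rw [hNeu y hy]
  have hswap₂ : (∫ y in (0:ℝ)..1, β₂ (1, y) * pd1 u₂ (1, y) * v₂ (1, y))
      = ∫ y in (0:ℝ)..1, β₁ (1, y) * pd1 u₁ (1, y) * v₂ (1, y) := by
    refine intervalIntegral.integral_congr fun y hy => ?_
    rw [uIcc_of_le (by norm_num : (0:ℝ) ≤ 1)] at hy
    rw [hNeu y hy]
  -- split the volume integrals using the PDEs
  have hmono₁ : Ioo (0:ℝ) 1 ×ˢ Ioo (0:ℝ) 1 ⊆ Icc (0:ℝ) 1 ×ˢ Icc (0:ℝ) 1 :=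
    prod_mono Ioo_subset_Icc_self Ioo_subset_Icc_self
  have hmono₂ : Ioo (1:ℝ) 2 ×ˢ Ioo (0:ℝ) 1 ⊆ Icc (1:ℝ) 2 ×ˢ Icc (0:ℝ) 1 :=
    prod_mono Ioo_subset_Icc_self Ioo_subset_Icc_self
  have hcpt₁ : IsCompact (Icc (0:ℝ) 1 ×ˢ Icc (0:ℝ) 1) := isCompact_Icc.prod isCompact_Icc
  have hcpt₂ : IsCompact (Icc (1:ℝ) 2 ×ˢ Icc (0:ℝ) 1) := isCompact_Icc.prod isCompact_Icc
  have intOn : ∀ {h : ℝ × ℝ → ℝ} {U K Ω : Set (ℝ × ℝ)}, ContinuousOn h U → K ⊆ U →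
      IsCompact K → Ω ⊆ K → IntegrableOn h Ω := by
    intro h U K Ω hc hKU hK hΩK
    exact ((hc.mono hKU).integrableOn_compact hK).mono_set hΩK
  have ig₁ : IntegrableOn (fun z => g₁ z * v₁ z) (Ioo (0:ℝ) 1 ×ˢ Ioo (0:ℝ) 1) :=
    intOn (hg₁.mul hv₁.continuousOn) hsub₁ hcpt₁ hmono₁
  have if₁ : IntegrableOn (fun z => f₁ z * v₁ z) (Ioo (0:ℝ) 1 ×ˢ Ioo (0:ℝ) 1) :=
    intOn (hf₁.mul hv₁.continuousOn) hsub₁ hcpt₁ hmono₁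
  have cs₁ : ContinuousOn (fun z => β₁ z * (pd1 u₁ z * pd1 v₁ z + pd2 u₁ z * pd2 v₁ z)) U₁ :=
    hβ₁.continuousOn.mul
      (((pd1_continuousOn hU₁ (hu₁.of_le (by norm_num))).mul (pd1_continuousOn hU₁ hv₁)).add
       ((pd2_continuousOn hU₁ (hu₁.of_le (by norm_num))).mul (pd2_continuousOn hU₁ hv₁)))
  have is₁ : IntegrableOn (fun z => β₁ z * (pd1 u₁ z * pd1 v₁ z + pd2 u₁ z * pd2 v₁ z))
      (Ioo (0:ℝ) 1 ×ˢ Ioo (0:ℝ) 1) := intOn cs₁ hsub₁ hcpt₁ hmono₁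
  have ig₂ : IntegrableOn (fun z => g₂ z * v₂ z) (Ioo (1:ℝ) 2 ×ˢ Ioo (0:ℝ) 1) :=
    intOn (hg₂.mul hv₂.continuousOn) hsub₂ hcpt₂ hmono₂
  have if₂ : IntegrableOn (fun z => f₂ z * v₂ z) (Ioo (1:ℝ) 2 ×ˢ Ioo (0:ℝ) 1) :=
    intOn (hf₂.mul hv₂.continuousOn) hsub₂ hcpt₂ hmono₂
  have cs₂ : ContinuousOn (fun z => β₂ z * (pd1 u₂ z * pd1 v₂ z + pd2 u₂ z * pd2 v₂ z)) U₂ :=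
    hβ₂.continuousOn.mul
      (((pd1_continuousOn hU₂ (hu₂.of_le (by norm_num))).mul (pd1_continuousOn hU₂ hv₂)).add
       ((pd2_continuousOn hU₂ (hu₂.of_le (by norm_num))).mul (pd2_continuousOn hU₂ hv₂)))
  have is₂ : IntegrableOn (fun z => β₂ z * (pd1 u₂ z * pd1 v₂ z + pd2 u₂ z * pd2 v₂ z))
      (Ioo (1:ℝ) 2 ×ˢ Ioo (0:ℝ) 1) := intOn cs₂ hsub₂ hcpt₂ hmono₂
  have split₁ : (∫ z in Ioo (0:ℝ) 1 ×ˢ Ioo (0:ℝ) 1,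
        (divGrad β₁ u₁ z * v₁ z + β₁ z * (pd1 u₁ z * pd1 v₁ z + pd2 u₁ z * pd2 v₁ z)))
      = c₁ * (∫ z in Ioo (0:ℝ) 1 ×ˢ Ioo (0:ℝ) 1, g₁ z * v₁ z)
        - (∫ z in Ioo (0:ℝ) 1 ×ˢ Ioo (0:ℝ) 1, f₁ z * v₁ z)
        + ∫ z in Ioo (0:ℝ) 1 ×ˢ Ioo (0:ℝ) 1,
            β₁ z * (pd1 u₁ z * pd1 v₁ z + pd2 u₁ z * pd2 v₁ z) := by
    rw [setIntegral_congr_fun (measurableSet_Ioo.prod measurableSet_Ioo)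
      (g := fun z => (c₁ * (g₁ z * v₁ z) - f₁ z * v₁ z)
        + β₁ z * (pd1 u₁ z * pd1 v₁ z + pd2 u₁ z * pd2 v₁ z))
      (fun z hz => by
        have h := hPDE₁ z hz
        have h2 : divGrad β₁ u₁ z = c₁ * g₁ z - f₁ z := by linarith
        rw [h2]; ring)]
    calc (∫ z in Ioo (0:ℝ) 1 ×ˢ Ioo (0:ℝ) 1, (c₁ * (g₁ z * v₁ z) - f₁ z * v₁ z + β₁ z * (pd1 u₁ z * pd1 v₁ z + pd2 u₁ z * pd2 v₁ z)))
        = (∫ z in Ioo (0:ℝ) 1 ×ˢ Ioo (0:ℝ) 1, (c₁ * (g₁ z * v₁ z) - f₁ z * v₁ z))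
            + ∫ z in Ioo (0:ℝ) 1 ×ˢ Ioo (0:ℝ) 1, β₁ z * (pd1 u₁ z * pd1 v₁ z + pd2 u₁ z * pd2 v₁ z) :=
          integral_add ((ig₁.const_mul c₁).sub if₁) is₁
      _ = ((∫ z in Ioo (0:ℝ) 1 ×ˢ Ioo (0:ℝ) 1, c₁ * (g₁ z * v₁ z)) - ∫ z in Ioo (0:ℝ) 1 ×ˢ Ioo (0:ℝ) 1, f₁ z * v₁ z)
            + ∫ z in Ioo (0:ℝ) 1 ×ˢ Ioo (0:ℝ) 1, β₁ z * (pd1 u₁ z * pd1 v₁ z + pd2 u₁ z * pd2 v₁ z) := by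
          rw [integral_sub (ig₁.const_mul c₁) if₁]
      _ = _ := by rw [integral_const_mul]
  have split₂ : (∫ z in Ioo (1:ℝ) 2 ×ˢ Ioo (0:ℝ) 1,
        (divGrad β₂ u₂ z * v₂ z + β₂ z * (pd1 u₂ z * pd1 v₂ z + pd2 u₂ z * pd2 v₂ z)))
      = c₂ * (∫ z in Ioo (1:ℝ) 2 ×ˢ Ioo (0:ℝ) 1, g₂ z * v₂ z)
        - (∫ z in Ioo (1:ℝ) 2 ×ˢ Ioo (0:ℝ) 1, f₂ z * v₂ z)
        + ∫ z in Ioo (1:ℝ) 2 ×ˢ Ioo (0:ℝ) 1,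
            β₂ z * (pd1 u₂ z * pd1 v₂ z + pd2 u₂ z * pd2 v₂ z) := by
    rw [setIntegral_congr_fun (measurableSet_Ioo.prod measurableSet_Ioo)
      (g := fun z => (c₂ * (g₂ z * v₂ z) - f₂ z * v₂ z)
        + β₂ z * (pd1 u₂ z * pd1 v₂ z + pd2 u₂ z * pd2 v₂ z))
      (fun z hz => by
        have h := hPDE₂ z hz
        have h2 : divGrad β₂ u₂ z = c₂ * g₂ z - f₂ z := by linarith
        rw [h2]; ring)]
    calc (∫ z in Ioo (1:ℝ) 2 ×ˢ Ioo (0:ℝ) 1, (c₂ * (g₂ z * v₂ z) - f₂ z * v₂ z + β₂ z * (pd1 u₂ z * pd1 v₂ z + pd2 u₂ z * pd2 v₂ z)))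
        = (∫ z in Ioo (1:ℝ) 2 ×ˢ Ioo (0:ℝ) 1, (c₂ * (g₂ z * v₂ z) - f₂ z * v₂ z))
            + ∫ z in Ioo (1:ℝ) 2 ×ˢ Ioo (0:ℝ) 1, β₂ z * (pd1 u₂ z * pd1 v₂ z + pd2 u₂ z * pd2 v₂ z) :=
          integral_add ((ig₂.const_mul c₂).sub if₂) is₂
      _ = ((∫ z in Ioo (1:ℝ) 2 ×ˢ Ioo (0:ℝ) 1, c₂ * (g₂ z * v₂ z)) - ∫ z in Ioo (1:ℝ) 2 ×ˢ Ioo (0:ℝ) 1, f₂ z * v₂ z)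
            + ∫ z in Ioo (1:ℝ) 2 ×ˢ Ioo (0:ℝ) 1, β₂ z * (pd1 u₂ z * pd1 v₂ z + pd2 u₂ z * pd2 v₂ z) := by
          rw [integral_sub (ig₂.const_mul c₂) if₂]
      _ = _ := by rw [integral_const_mul]
  rw [split₁] at G₁
  rw [split₂] at G₂
  linarith [G₁, G₂, hswap₁, hswap₂]
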